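/- Let (X, r) be a non-degenerate involutive set-theoretic solution of the Yang–Baxter equation with |X| = m ≥ 2 and let n ≥ 2. For every y ∈ X^n there exist a partition λ ∈ P(n, m) and a λ-element x such that y ∈ O(x). Consequently, X^n = ⋃_{λ ∈ P(n,m)} B(λ). -/

import Mathlib

/-! Set-theoretic solutions of the Yang–Baxter equation.
For `r : X × X → X × X` we write `r (i, j) = (σ i j, τ j i)`, i.e. `σ_i(j) = σ i j` and
`τ_j(i) = τ j i`. -/

variable {X : Type*}

/-- The map `r : X × X → X × X` determined by families `σ`, `τ` via
`r (i, j) = (σ_i(j), τ_j(i))`. -/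
def rmapF (σ τ : X → X → X) : X × X → X × X := fun p => (σ p.1 p.2, τ p.2 p.1)

/-- `r × id` on `X × X × X`. -/
def ridF (r : X × X → X × X) : X × X × X → X × X × X :=
  fun p => ((r (p.1, p.2.1)).1, (r (p.1, p.2.1)).2, p.2.2)

/-- `id × r` on `X × X × X`. -/
def idrF (r : X × X → X × X) : X × X × X → X × X × X := fun p => (p.1, r p.2)

/-- The braid (Yang–Baxter) equation `(r × id) ∘ (id × r) ∘ (r × id) = (id × r) ∘ (r × id) ∘ (id × r)`. -/
def BraidEq (r : X × X → X × X) : Prop :=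
  ridF r ∘ idrF r ∘ ridF r = idrF r ∘ ridF r ∘ idrF r

/-- A non-degenerate involutive set-theoretic solution of the Yang–Baxter equation on `X`:
the maps `σ_i` and `τ_i` are bijective (packaged as equivalences), the induced map
`r (i, j) = (σ_i(j), τ_j(i))` satisfies the braid equation, and `r ∘ r = id`
(which in particular makes `r` bijective). -/
structure NDIS (X : Type*) where
  σ : X → X ≃ X
  τ : X → X ≃ X
  braid : BraidEq (rmapF (fun i => ⇑(σ i)) (fun i => ⇑(τ i)))
  invol : ∀ p : X × X,
    rmapF (fun i => ⇑(σ i)) (fun i => ⇑(τ i))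
      (rmapF (fun i => ⇑(σ i)) (fun i => ⇑(τ i)) p) = p

namespace NDIS

/-- The map `r` of the solution. -/
def r (S : NDIS X) : X × X → X × X := rmapF (fun i => ⇑(S.σ i)) (fun i => ⇑(S.τ i))

/-- The diagonal `D : X → X`, `D(i) = τ_i⁻¹(i)`. -/
def D (S : NDIS X) : X → X := fun i => (S.τ i).symm i

end NDIS
namespace NDIS

/-- One elementary move on words: apply `r` to two adjacent letters. -/
def Step (S : NDIS X) (x y : List X) : Prop :=
  ∃ (u v : List X) (i j : X), x = u ++ i :: j :: v ∧ y = u ++ S.σ i j :: S.τ j i :: v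

/-- The orbit `O(x)` of a word `x` under the equivalence relation generated by the
adjacent `r`-moves (equivalently, the orbit of the induced `S_n`-action on `X^n`). -/
def Orb (S : NDIS X) (x : List X) : Set (List X) := {y | Relation.EqvGen S.Step x y}

/-- `Ψ_k(a) = (D^{k−1}(a), …, D(a), a)`. -/
def Psi (S : NDIS X) (k : ℕ) (a : X) : List X :=
  (List.range k).map fun t => S.D^[k - 1 - t] a

/-- The inverse of the diagonal `D`. -/
noncomputable def Dinv (S : NDIS X) [Nonempty X] : X → X := Function.invFun S.D

/-- `Ψ_{−k}(a) = (a, D^{−1}(a), …, D^{−(k−1)}(a))`. -/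
noncomputable def PsiNeg (S : NDIS X) [Nonempty X] (k : ℕ) (a : X) : List X :=
  (List.range k).map fun t => S.Dinv^[t] a

/-- `σ_x = σ_{a_1} ∘ σ_{a_2} ∘ ⋯ ∘ σ_{a_k}` for a word `x = (a_1, …, a_k)`. -/
def sigmaWord (S : NDIS X) (x : List X) (z : X) : X := x.foldr (fun a w => S.σ a w) z

/-- `τ_x = τ_{a_k} ∘ ⋯ ∘ τ_{a_2} ∘ τ_{a_1}` for a word `x = (a_1, …, a_k)`. -/
def tauWord (S : NDIS X) (x : List X) (z : X) : X := x.foldl (fun w a => S.τ a w) z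

/-- The concatenation `Ψ_{L 0}(a 0) Ψ_{L 1}(a 1) ⋯ Ψ_{L (k-1)}(a (k-1))`. -/
def word (S : NDIS X) {k : ℕ} (L : Fin k → ℕ) (a : Fin k → X) : List X :=
  (List.ofFn fun t => S.Psi (L t) (a t)).flatten

/-- The concatenation `Ψ_{L (i+1)}(a (i+1)) ⋯ Ψ_{L (j-1)}(a (j-1))` of the blocks strictly
between positions `i` and `j` (the empty word when `j = i + 1`). -/
def midword (S : NDIS X) {k : ℕ} (L : Fin k → ℕ) (a : Fin k → X) (i j : Fin k) : List X :=
  (((List.ofFn fun t => S.Psi (L t) (a t)).drop ((i : ℕ) + 1)).take ((j : ℕ) - (i : ℕ) - 1)).flatten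

/-- The family `a` yields a `λ`-element: `a_j ≠ D^{−λ_j}(τ_w(a_i))` for all `i < j`, with
`w = Ψ_{λ_{i+1}}(a_{i+1}) ⋯ Ψ_{λ_{j−1}}(a_{j−1})`. -/
def IsLambdaFamily (S : NDIS X) [Nonempty X] {k : ℕ} (L : Fin k → ℕ) (a : Fin k → X) : Prop :=
  ∀ i j : Fin k, i < j →
    a j ≠ S.Dinv^[L j] (S.tauWord (S.midword L a i j) (a i))

/-- `x` is a `λ`-element for the partition with positive parts `L 0 ≥ L 1 ≥ ⋯ ≥ L (k-1) > 0`. -/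
def IsLambdaWord (S : NDIS X) [Nonempty X] {k : ℕ} (L : Fin k → ℕ) (x : List X) : Prop :=
  ∃ a : Fin k → X, x = S.word L a ∧ S.IsLambdaFamily L a

/-- The bijection `b` of `X^n` applying `r` to the entries in (0-based) positions `j` and
`j + 1` and fixing all other entries. -/
def bmap (S : NDIS X) {n : ℕ} (j : ℕ) (hj : j + 1 < n) (x : Fin n → X) : Fin n → X :=
  fun t =>
    if (t : ℕ) = j then S.σ (x ⟨j, by omega⟩) (x ⟨j + 1, hj⟩)
    else if (t : ℕ) = j + 1 then S.τ (x ⟨j + 1, hj⟩) (x ⟨j, by omega⟩)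
    else x t

/-- One elementary move on `X^n` (as functions `Fin n → X`). -/
def StepF (S : NDIS X) {n : ℕ} (x y : Fin n → X) : Prop :=
  ∃ (j : ℕ) (hj : j + 1 < n), y = S.bmap j hj x

end NDIS

/-- The offset `λ_1 + ⋯ + λ_i` of the `i`-th block (0-based). -/
def blockOffset {k : ℕ} (L : Fin k → ℕ) (i : Fin k) : ℕ :=
  ∑ t ∈ Finset.univ.filter (fun t => t < i), L t

/-- A `(λ_1, …, λ_k)`-shuffle: a permutation strictly increasing on each consecutive block. -/
def IsShuffle {k n : ℕ} (L : Fin k → ℕ) (θ : Equiv.Perm (Fin n)) : Prop :=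
  ∀ (i : Fin k) (p q : Fin n), blockOffset L i ≤ (p : ℕ) → p < q →
    (q : ℕ) < blockOffset L i + L i → θ p < θ q

namespace NDIS
variable {X : Type*} (S : NDIS X)

lemma invol_left (a b : X) : S.σ (S.σ a b) (S.τ b a) = a := by
  have h := S.invol (a, b)
  simp only [rmapF, Prod.ext_iff] at h
  exact h.1

lemma invol_right (a b : X) : S.τ (S.τ b a) (S.σ a b) = b := by
  have h := S.invol (a, b)
  simp only [rmapF, Prod.ext_iff] at h
  exact h.2

lemma braid_tau (i j k : X) : S.τ k (S.τ j i) = S.τ (S.τ k j) (S.τ (S.σ j k) i) := by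
  have := congrFun S.braid (i, j, k)
  have h := congrArg (fun p : X × X × X => p.2.2) this
  simpa [ridF, idrF, rmapF, Function.comp] using h

lemma tau_D (a : X) : S.τ a (S.D a) = a := by
  simp [D]

lemma tau_sigma_D (a b : X) : S.τ (S.σ a b) (S.D a) = S.D (S.τ b a) := by
  have h := (S.braid_tau (S.D a) a b).symm
  rw [S.tau_D] at h
  -- h : S.τ (S.τ b a) (S.τ (S.σ a b) (S.D a)) = S.τ b a
  have : S.τ (S.τ b a) (S.τ (S.σ a b) (S.D a)) = S.τ (S.τ b a) (S.D (S.τ b a)) := by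
    rw [h, S.tau_D]
  exact (S.τ (S.τ b a)).injective this

lemma tau_D_sigma (a b : X) : S.τ a (S.D (S.σ a b)) = S.D b := by
  have h := S.tau_sigma_D (S.σ a b) (S.τ b a)
  rwa [S.invol_left, S.invol_right] at h

lemma D_surjective : Function.Surjective S.D := by
  intro a
  refine ⟨(S.σ a).symm a, ?_⟩
  set b := (S.σ a).symm a with hb
  have hσ : S.σ a b = a := (S.σ a).apply_symm_apply a
  have h1 : S.σ a (S.τ b a) = a := by
    have := S.invol_left a b; rwa [hσ] at this
  have hτ : S.τ b a = b := by
    apply (S.σ a).injective; rw [h1, hσ]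
  show (S.τ b).symm b = a
  apply (S.τ b).injective
  rw [(S.τ b).apply_symm_apply, hτ]

lemma D_bijective [Finite X] : Function.Bijective S.D :=
  Finite.surjective_iff_bijective.mp S.D_surjective

lemma D_injective [Finite X] : Function.Injective S.D := S.D_bijective.1

end NDIS
namespace NDIS
variable {X : Type*} (S : NDIS X)

@[simp] lemma Psi_zero (a : X) : S.Psi 0 a = [] := by simp [Psi]

lemma Psi_succ_cons (k : ℕ) (a : X) : S.Psi (k+1) a = S.D^[k] a :: S.Psi k a := by
  unfold Psi
  rw [List.range_succ_eq_map, List.map_cons, List.map_map]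
  congr 1
  apply List.map_congr_left
  intro t ht
  simp only [List.mem_range] at ht
  show S.D^[k + 1 - 1 - (t + 1)] a = S.D^[k - 1 - t] a
  congr 1
  omega

lemma Psi_succ_append (k : ℕ) (a : X) : S.Psi (k+1) a = S.Psi k (S.D a) ++ [a] := by
  simp only [Psi, List.range_succ, List.map_append, List.map_cons, List.map_nil]
  congr 1
  · apply List.map_congr_left
    intro t ht
    simp only [List.mem_range] at ht
    have : k + 1 - 1 - t = (k - 1 - t) + 1 := by omega
    rw [this, Function.iterate_succ_apply]
  · simp

@[simp] lemma Psi_one (a : X) : S.Psi 1 a = [a] := by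
  rw [Psi_succ_cons]; simp

@[simp] lemma Psi_length (k : ℕ) (a : X) : (S.Psi k a).length = k := by simp [Psi]

lemma Psi_add (j l : ℕ) (b : X) : S.Psi (j + l) b = S.Psi j (S.D^[l] b) ++ S.Psi l b := by
  induction l generalizing b with
  | zero => simp
  | succ l ih =>
      have : j + (l + 1) = (j + l) + 1 := by omega
      rw [this, Psi_succ_append, ih (S.D b), Psi_succ_append]
      simp only [← Function.iterate_succ_apply, List.append_assoc]

@[simp] lemma sigmaWord_nil (z : X) : S.sigmaWord [] z = z := rfl
@[simp] lemma sigmaWord_cons (a : X) (w : List X) (z : X) :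
    S.sigmaWord (a :: w) z = S.σ a (S.sigmaWord w z) := rfl
lemma sigmaWord_append (u v : List X) (z : X) :
    S.sigmaWord (u ++ v) z = S.sigmaWord u (S.sigmaWord v z) := by
  simp [sigmaWord, List.foldr_append]

@[simp] lemma tauWord_nil (z : X) : S.tauWord [] z = z := rfl
@[simp] lemma tauWord_cons (a : X) (w : List X) (z : X) :
    S.tauWord (a :: w) z = S.tauWord w (S.τ a z) := rfl
lemma tauWord_append (u v : List X) (z : X) :
    S.tauWord (u ++ v) z = S.tauWord v (S.tauWord u z) := by
  simp [tauWord, List.foldl_append]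

lemma tauWord_injective (w : List X) : Function.Injective (S.tauWord w) := by
  induction w with
  | nil => exact fun a b h => h
  | cons a w ih =>
      intro x y h
      simp only [tauWord_cons] at h
      exact (S.τ a).injective (ih h)

-- identity I_j
lemma tau_sigma_psi (j : ℕ) (a b : X) :
    S.τ (S.sigmaWord (S.Psi j a) b) (S.D^[j] a) = S.D^[j] (S.τ b a) := by
  induction j generalizing b with
  | zero => simp
  | succ j ih =>
      rw [Psi_succ_cons, sigmaWord_cons]
      rw [Function.iterate_succ_apply', Function.iterate_succ_apply']
      rw [S.tau_sigma_D (S.D^[j] a) (S.sigmaWord (S.Psi j a) b), ih]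

-- J_w : τ_w (D (σ_w b)) = D b
lemma tauWord_D_sigmaWord (w : List X) (b : X) :
    S.tauWord w (S.D (S.sigmaWord w b)) = S.D b := by
  induction w generalizing b with
  | nil => simp
  | cons a w ih =>
      rw [sigmaWord_cons, tauWord_cons, S.tau_D_sigma a, ih]

-- K_block : τ_{Ψ_j(τ_z a)} (σ_{Ψ_j a} z) = z
lemma tauWord_psi_sigmaWord_psi (j : ℕ) (a z : X) :
    S.tauWord (S.Psi j (S.τ z a)) (S.sigmaWord (S.Psi j a) z) = z := by
  induction j with
  | zero => simp
  | succ j ih =>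
      rw [Psi_succ_cons, Psi_succ_cons, sigmaWord_cons, tauWord_cons]
      have h1 : S.D^[j] (S.τ z a) = S.τ (S.sigmaWord (S.Psi j a) z) (S.D^[j] a) :=
        (S.tau_sigma_psi j a z).symm
      rw [h1, S.invol_right, ih]

-- τ_{Ψ_l c} (D^l c) = c
lemma tauWord_psi_D_pow (l : ℕ) (c : X) : S.tauWord (S.Psi l c) (S.D^[l] c) = c := by
  induction l with
  | zero => simp
  | succ l ih =>
      rw [Psi_succ_cons, tauWord_cons, Function.iterate_succ_apply', S.tau_D, ih]

end NDIS
namespace NDIS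
variable {X : Type*} (S : NDIS X)

/-- Orbit equivalence. -/
def Rel (x y : List X) : Prop := Relation.EqvGen S.Step x y

lemma Rel.refl' (x : List X) : S.Rel x x := Relation.EqvGen.refl x
lemma Rel.symm' {x y : List X} (h : S.Rel x y) : S.Rel y x := Relation.EqvGen.symm x y h
lemma Rel.trans' {x y z : List X} (h : S.Rel x y) (h' : S.Rel y z) : S.Rel x z :=
  Relation.EqvGen.trans x y z h h'
lemma Rel.of_step {x y : List X} (h : S.Step x y) : S.Rel x y := Relation.EqvGen.rel x y h

lemma Step.append {x y : List X} (u v : List X) (h : S.Step x y) :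
    S.Step (u ++ x ++ v) (u ++ y ++ v) := by
  obtain ⟨u', v', i, j, hx, hy⟩ := h
  exact ⟨u ++ u', v' ++ v, i, j, by simp [hx], by simp [hy]⟩

lemma Rel.append {x y : List X} (u v : List X) (h : S.Rel x y) :
    S.Rel (u ++ x ++ v) (u ++ y ++ v) := by
  induction h with
  | rel a b hab => exact Rel.of_step S (Step.append S u v hab)
  | refl a => exact Rel.refl' S _
  | symm a b _ ih => exact Rel.symm' S ih
  | trans a b c _ _ ih1 ih2 => exact Rel.trans' S ih1 ih2

lemma Rel.append_left {x y : List X} (u : List X) (h : S.Rel x y) :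
    S.Rel (u ++ x) (u ++ y) := by
  have := Rel.append S u [] h; simpa using this

lemma Rel.append_right {x y : List X} (v : List X) (h : S.Rel x y) :
    S.Rel (x ++ v) (y ++ v) := by
  have := Rel.append S [] v h; simpa using this

lemma step_cons (i j : X) (v : List X) :
    S.Step (i :: j :: v) (S.σ i j :: S.τ j i :: v) :=
  ⟨[], v, i, j, rfl, rfl⟩

/-- Lemma C: move one letter left through a frozen block. -/
lemma rel_psi_letter (j : ℕ) (a b : X) :
    S.Rel (S.Psi j a ++ [b]) (S.sigmaWord (S.Psi j a) b :: S.Psi j (S.τ b a)) := by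
  induction j generalizing b with
  | zero => simpa using Rel.refl' S [b]
  | succ j ih =>
      rw [Psi_succ_cons]
      have h1 : S.Rel (S.D^[j] a :: (S.Psi j a ++ [b]))
          (S.D^[j] a :: (S.sigmaWord (S.Psi j a) b :: S.Psi j (S.τ b a))) :=
        Rel.append_left S [S.D^[j] a] (ih b)
      have h2 : S.Step (S.D^[j] a :: S.sigmaWord (S.Psi j a) b :: S.Psi j (S.τ b a))
          (S.σ (S.D^[j] a) (S.sigmaWord (S.Psi j a) b) ::
            S.τ (S.sigmaWord (S.Psi j a) b) (S.D^[j] a) :: S.Psi j (S.τ b a)) :=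
        step_cons S _ _ _
      have h3 := Rel.trans' S h1 (Rel.of_step S h2)
      rw [S.tau_sigma_psi j a b] at h3
      rw [Psi_succ_cons, sigmaWord_cons]
      simpa using h3

/-- Render a list of blocks. -/
def render (P : List (ℕ × X)) : List X := (P.map fun p => S.Psi p.1 p.2).flatten

@[simp] lemma render_nil : S.render [] = [] := rfl
@[simp] lemma render_cons (p : ℕ × X) (P : List (ℕ × X)) :
    S.render (p :: P) = S.Psi p.1 p.2 ++ S.render P := rfl
lemma render_append (P Q : List (ℕ × X)) :
    S.render (P ++ Q) = S.render P ++ S.render Q := by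
  simp [render]

/-- Pass a letter `b` leftwards through all blocks of `v` (modifying them). -/
def passL : List (ℕ × X) → X → List (ℕ × X)
  | [], _ => []
  | (l, a) :: v, b => (l, S.τ (S.sigmaWord (S.render v) b) a) :: passL v b

@[simp] lemma passL_nil (b : X) : S.passL [] b = [] := rfl

lemma passL_fst (v : List (ℕ × X)) (b : X) : (S.passL v b).map Prod.fst = v.map Prod.fst := by
  induction v with
  | nil => rfl
  | cons p v ih => cases p; simp [passL, ih]

/-- Lemma C for a sequence of blocks. -/
lemma rel_render_letter (v : List (ℕ × X)) (b : X) :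
    S.Rel (S.render v ++ [b]) (S.sigmaWord (S.render v) b :: S.render (S.passL v b)) := by
  induction v generalizing b with
  | nil => simpa using Rel.refl' S [b]
  | cons p v ih =>
      obtain ⟨l, a⟩ := p
      rw [render_cons]
      have h1 : S.Rel (S.Psi l a ++ (S.render v ++ [b]))
          (S.Psi l a ++ (S.sigmaWord (S.render v) b :: S.render (S.passL v b))) :=
        Rel.append_left S _ (ih b)
      have h2 : S.Rel (S.Psi l a ++ [S.sigmaWord (S.render v) b] ++ S.render (S.passL v b))
          ((S.sigmaWord (S.Psi l a) (S.sigmaWord (S.render v) b) ::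
            S.Psi l (S.τ (S.sigmaWord (S.render v) b) a)) ++ S.render (S.passL v b)) :=
        Rel.append_right S _ (S.rel_psi_letter l a (S.sigmaWord (S.render v) b))
      have h3 : S.Rel (S.Psi l a ++ S.render v ++ [b])
          (S.sigmaWord (S.Psi l a ++ S.render v) b ::
            S.render ((l, S.τ (S.sigmaWord (S.render v) b) a) :: S.passL v b)) := by
        rw [sigmaWord_append]
        refine Rel.trans' S (y := S.Psi l a ++ [S.sigmaWord (S.render v) b] ++ S.render (S.passL v b)) ?_ ?_
        · simpa [List.append_assoc] using h1
        · simpa [List.append_assoc] using h2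
      simpa [passL] using h3

/-- K : τ of the modified word undoes σ of the original word. -/
lemma tauWord_passL (v : List (ℕ × X)) (z : X) :
    S.tauWord (S.render (S.passL v z)) (S.sigmaWord (S.render v) z) = z := by
  induction v generalizing z with
  | nil => simp
  | cons p v ih =>
      obtain ⟨l, a⟩ := p
      simp only [passL, render_cons, sigmaWord_append, tauWord_append]
      rw [S.tauWord_psi_sigmaWord_psi l a (S.sigmaWord (S.render v) z), ih]

end NDIS
namespace NDIS
variable {X : Type*}

/-- Pass a whole frozen block of size `l` with head `b` leftwards through the blocks `v`. -/
def pasB (S : NDIS X) : ℕ → List (ℕ × X) → X → List (ℕ × X)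
  | 0, v, _ => v
  | l + 1, v, b => pasB S l (S.passL v (S.D^[l] b)) b

variable (S : NDIS X)

/-- The new head of a block of size `l` after passing left through the blocks `v`. -/
def bst (S : NDIS X) : ℕ → List (ℕ × X) → X → X
  | 0, _, b => b
  | 1, v, b => S.sigmaWord (S.render v) b
  | l + 2, v, b => bst S (l + 1) (S.passL v (S.D^[l + 1] b)) b

lemma pasB_fst (l : ℕ) (v : List (ℕ × X)) (b : X) :
    (S.pasB l v b).map Prod.fst = v.map Prod.fst := by
  induction l generalizing v with
  | zero => rfl
  | succ l ih => rw [pasB, ih, passL_fst]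

/-- Head identity: `D^[l] (bst (l+1) v b) = σ_{render v} (D^[l] b)`. -/
lemma D_pow_bst (l : ℕ) (v : List (ℕ × X)) (b : X) :
    S.D^[l] (S.bst (l + 1) v b) = S.sigmaWord (S.render v) (S.D^[l] b) := by
  induction l generalizing v with
  | zero => simp [bst]
  | succ l ih =>
      have hb : S.bst (l + 2) v b = S.bst (l + 1) (S.passL v (S.D^[l + 1] b)) b := rfl
      set v₁ := S.passL v (S.D^[l + 1] b) with hv₁
      rw [hb, Function.iterate_succ_apply', ih v₁]
      apply S.tauWord_injective (S.render v₁)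
      rw [S.tauWord_D_sigmaWord, ← Function.iterate_succ_apply' S.D l b, S.tauWord_passL]

/-- Move a whole frozen block leftwards through a sequence of blocks. -/
lemma rel_render_block (l : ℕ) (v : List (ℕ × X)) (b : X) :
    S.Rel (S.render v ++ S.Psi l b) (S.Psi l (S.bst l v b) ++ S.render (S.pasB l v b)) := by
  induction l generalizing v with
  | zero => simpa [pasB] using Rel.refl' S (S.render v)
  | succ l ih =>
      set c := S.sigmaWord (S.render v) (S.D^[l] b) with hc
      set v₁ := S.passL v (S.D^[l] b) with hv₁
      have hA : S.Rel (S.render v ++ S.Psi (l + 1) b) ((c :: S.render v₁) ++ S.Psi l b) := by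
        rw [Psi_succ_cons]
        have := Rel.append_right S (S.Psi l b) (S.rel_render_letter v (S.D^[l] b))
        simpa [List.append_assoc] using this
      have hB : S.Rel ((c :: S.render v₁) ++ S.Psi l b)
          (c :: (S.Psi l (S.bst l v₁ b) ++ S.render (S.pasB l v₁ b))) := by
        have := Rel.append_left S [c] (ih v₁)
        simpa [List.append_assoc] using this
      have hAB := Rel.trans' S hA hB
      have hpas : S.pasB (l + 1) v b = S.pasB l v₁ b := rfl
      rw [hpas]
      cases l with
      | zero =>
          have hbst : S.bst 1 v b = c := by simp [bst, hc]
          simpa [pasB, hbst] using hAB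
      | succ l' =>
          have hbst : S.bst (l' + 2) v b = S.bst (l' + 1) v₁ b := rfl
          have hhead : S.D^[l' + 1] (S.bst (l' + 2) v b) = c := S.D_pow_bst (l' + 1) v b
          have hps : S.Psi (l' + 2) (S.bst (l' + 2) v b)
              = c :: S.Psi (l' + 1) (S.bst (l' + 1) v₁ b) := by
            rw [Psi_succ_cons, hhead, hbst]
          show S.Rel (S.render v ++ S.Psi (l' + 2) b)
            (S.Psi (l' + 2) (S.bst (l' + 2) v b) ++ S.render (S.pasB (l' + 1) v₁ b))
          rw [hps]
          simpa using hAB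
end NDIS
namespace NDIS
variable {X : Type*} (S : NDIS X)

/-- Merge: if the condition fails for blocks `(li,ai)` and `(lj,aj)` then they can be
merged into a single block. -/
lemma rel_merge (u v w : List (ℕ × X)) (li : ℕ) (l : ℕ) (ai aj : X)
    (hfail : S.D^[l + 1] aj = S.tauWord (S.render v) ai) :
    S.Rel (S.render (u ++ (li, ai) :: v ++ (l + 1, aj) :: w))
      (S.render (u ++ (li + (l + 1), S.bst (l + 1) v aj) :: (S.pasB (l + 1) v aj ++ w))) := by
  set b' := S.bst (l + 1) v aj with hb'
  have hhead : S.D^[l + 1] b' = ai := by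
    apply S.tauWord_injective (S.render v)
    rw [← hfail]
    rw [hb', Function.iterate_succ_apply', S.D_pow_bst l v aj]
    rw [S.tauWord_D_sigmaWord]
    exact (Function.iterate_succ_apply' S.D l aj).symm
  have hmerge : S.Psi li ai ++ S.Psi (l + 1) b' = S.Psi (li + (l + 1)) b' := by
    rw [S.Psi_add li (l + 1) b', hhead]
  have hblock := S.rel_render_block (l + 1) v aj
  have h1 := Rel.append S (S.render u ++ S.Psi li ai) (S.render w) hblock
  have lhs_eq : S.render (u ++ (li, ai) :: v ++ (l + 1, aj) :: w)
      = S.render u ++ S.Psi li ai ++ (S.render v ++ S.Psi (l + 1) aj) ++ S.render w := by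
    simp [render_append, List.append_assoc]
  have rhs_eq : S.render (u ++ (li + (l + 1), b') :: (S.pasB (l + 1) v aj ++ w))
      = S.render u ++ S.Psi li ai ++ (S.Psi (l + 1) b' ++ S.render (S.pasB (l + 1) v aj)) ++ S.render w := by
    simp only [render_append, render_cons]
    rw [← hmerge]
    simp [List.append_assoc]
  rw [lhs_eq, rhs_eq]
  exact h1

/-- Swap two adjacent blocks. -/
lemma rel_swap (u w : List (ℕ × X)) (la lb : ℕ) (a b : X) :
    S.Rel (S.render (u ++ (la, a) :: (lb, b) :: w))
      (S.render (u ++ (lb, S.bst lb [(la, a)] b) :: (S.pasB lb [(la, a)] b ++ w))) := by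
  have hblock := S.rel_render_block lb [(la, a)] b
  have h1 := Rel.append S (S.render u) (S.render w) hblock
  have lhs_eq : S.render (u ++ (la, a) :: (lb, b) :: w)
      = S.render u ++ (S.render [(la, a)] ++ S.Psi lb b) ++ S.render w := by
    simp [render_append, List.append_assoc]
  have rhs_eq : S.render (u ++ (lb, S.bst lb [(la, a)] b) :: (S.pasB lb [(la, a)] b ++ w))
      = S.render u ++ (S.Psi lb (S.bst lb [(la, a)] b) ++ S.render (S.pasB lb [(la, a)] b)) ++ S.render w := by
    simp [render_append, List.append_assoc]
  rw [lhs_eq, rhs_eq]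
  exact h1

end NDIS

/-- Number of (strict) inversions of a list of naturals. -/
def linv : List ℕ → ℕ
  | [] => 0
  | x :: xs => xs.countP (fun y => decide (x < y)) + linv xs

lemma linv_le (s : List ℕ) : linv s ≤ s.length * s.length := by
  induction s with
  | nil => simp [linv]
  | cons x xs ih =>
      have h1 : xs.countP (fun y => decide (x < y)) ≤ xs.length := List.countP_le_length
      simp only [linv, List.length_cons]
      nlinarith [ih]

lemma linv_swap (u w : List ℕ) (x y : ℕ) (hxy : x < y) :
    linv (u ++ y :: x :: w) + 1 = linv (u ++ x :: y :: w) := by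
  induction u with
  | nil =>
      simp only [List.nil_append, linv, List.countP_cons]
      have hx : decide (x < y) = true := by simpa using hxy
      have hy : decide (y < x) = false := by simp; omega
      rw [hx, hy]
      simp only [Bool.false_eq_true, if_true, if_false]
      omega
  | cons z u ih =>
      simp only [List.cons_append, linv, List.append_eq]
      have hcount : (u ++ y :: x :: w).countP (fun t => decide (z < t))
          = (u ++ x :: y :: w).countP (fun t => decide (z < t)) := by
        simp only [List.countP_append, List.countP_cons]
        omega
      omega

lemma sq_sum_le (s : List ℕ) : (s.map (fun x => x * x)).sum ≤ s.sum * s.sum := by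
  induction s with
  | nil => simp
  | cons x xs ih =>
      simp only [List.map_cons, List.sum_cons]
      nlinarith [ih, Nat.zero_le (xs.map (fun x => x * x)).sum, Nat.zero_le xs.sum]

lemma length_le_sum (s : List ℕ) (h : ∀ x ∈ s, 1 ≤ x) : s.length ≤ s.sum := by
  induction s with
  | nil => simp
  | cons x xs ih =>
      simp only [List.length_cons, List.sum_cons]
      have := h x (by simp)
      have := ih (fun y hy => h y (by simp [hy]))
      omega
namespace NDIS
variable {X : Type*} (S : NDIS X)

/-- All pairwise conditions hold. -/
def Good (P : List (ℕ × X)) : Prop :=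
  ∀ u li ai v lj aj w, P = u ++ (li, ai) :: v ++ (lj, aj) :: w →
    S.D^[lj] aj ≠ S.tauWord (S.render v) ai

end NDIS

lemma not_chain'_decomp {α β : Type*} (f : α → β) (R : β → β → Prop) (P : List α)
    (h : ¬ List.Chain' R (P.map f)) :
    ∃ u p q w, P = u ++ p :: q :: w ∧ ¬ R (f p) (f q) := by
  induction P with
  | nil => exact absurd List.isChain_nil h
  | cons p P ih =>
      cases P with
      | nil => exact absurd (List.isChain_singleton _) h
      | cons q P' =>
          by_cases hr : R (f p) (f q)
          · have h' : ¬ List.Chain' R ((q :: P').map f) := by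
              intro hc
              exact h (List.isChain_cons_cons.mpr ⟨hr, hc⟩)
            obtain ⟨u, p', q', w, heq, hR⟩ := ih h'
            exact ⟨p :: u, p', q', w, by simp [heq], hR⟩
          · exact ⟨[], p, q, P', rfl, hr⟩

lemma pos_of_fst_eq {X : Type*} {P Q : List (ℕ × X)}
    (h : Q.map Prod.fst = P.map Prod.fst) (hP : ∀ p ∈ P, 1 ≤ p.1) : ∀ q ∈ Q, 1 ≤ q.1 := by
  intro q hq
  have h1 : q.1 ∈ Q.map Prod.fst := List.mem_map_of_mem hq
  rw [h] at h1
  obtain ⟨p, hp, he⟩ := List.mem_map.mp h1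
  exact he ▸ hP p hp

/-- Sum of squares of the block sizes. -/
def sumsq {X : Type*} (P : List (ℕ × X)) : ℕ := ((P.map Prod.fst).map (fun l => l * l)).sum

/-- The termination measure. -/
def meas {X : Type*} (n : ℕ) (P : List (ℕ × X)) : ℕ :=
  (n * n - sumsq P) * (n * n + 1) + linv (P.map Prod.fst)

namespace NDIS
variable {X : Type*} (S : NDIS X)

lemma reduce (n : ℕ) : ∀ (N : ℕ) (P : List (ℕ × X)), meas n P < N →
    (∀ p ∈ P, 1 ≤ p.1) → (P.map Prod.fst).sum = n →
    ∃ Q, (∀ q ∈ Q, 1 ≤ q.1) ∧ (Q.map Prod.fst).sum = n ∧ S.Rel (S.render P) (S.render Q)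
      ∧ S.Good Q ∧ List.Chain' (fun x y : ℕ => y ≤ x) (Q.map Prod.fst) := by
  intro N
  induction N with
  | zero => intro P h; omega
  | succ N ih =>
      intro P hm hpos hsum
      by_cases hg : S.Good P
      · by_cases hc : List.Chain' (fun x y : ℕ => y ≤ x) (P.map Prod.fst)
        · exact ⟨P, hpos, hsum, Rel.refl' S _, hg, hc⟩
        · -- swap an adjacent inversion
          obtain ⟨u, p, q, w, heqP, hR⟩ := not_chain'_decomp Prod.fst _ P hc
          obtain ⟨la, a⟩ := p; obtain ⟨lb, b⟩ := q
          have hlt : la < lb := by simpa using hR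
          set Q' := u ++ (lb, S.bst lb [(la, a)] b) :: (S.pasB lb [(la, a)] b ++ w) with hQ'
          have hfstpas : (S.pasB lb [(la, a)] b).map Prod.fst = [la] := by
            rw [S.pasB_fst]; rfl
          have hfstQ' : Q'.map Prod.fst = u.map Prod.fst ++ lb :: la :: w.map Prod.fst := by
            simp [hQ', hfstpas]
          have hfstP : P.map Prod.fst = u.map Prod.fst ++ la :: lb :: w.map Prod.fst := by
            simp [heqP]
          have hlbpos : 1 ≤ lb := hpos (lb, b) (by rw [heqP]; simp)
          have hlapos : 1 ≤ la := hpos (la, a) (by rw [heqP]; simp)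
          have hposQ' : ∀ q ∈ Q', 1 ≤ q.1 := by
            intro q hq
            simp only [hQ', List.mem_append, List.mem_cons] at hq
            rcases hq with hq | hq | hq | hq
            · exact hpos q (by rw [heqP]; simp [hq])
            · rw [hq]; exact hlbpos
            · have h1 : q.1 ∈ (S.pasB lb [(la, a)] b).map Prod.fst := List.mem_map_of_mem hq
              rw [hfstpas] at h1
              simp at h1
              omega
            · exact hpos q (by rw [heqP]; simp [hq])
          have hsumQ' : (Q'.map Prod.fst).sum = n := by
            rw [hfstQ']
            rw [hfstP] at hsum
            simp at hsum ⊢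
            omega
          have hsumsq : sumsq Q' = sumsq P := by
            unfold sumsq
            rw [hfstQ', hfstP]
            simp
            omega
          have hlinv : linv (Q'.map Prod.fst) + 1 = linv (P.map Prod.fst) := by
            rw [hfstQ', hfstP]
            exact linv_swap _ _ _ _ hlt
          have hmeas : meas n Q' < N := by
            unfold meas at hm ⊢
            rw [hsumsq]
            omega
          obtain ⟨Q, hQpos, hQsum, hQrel, hQgood, hQchain⟩ := ih Q' hmeas hposQ' hsumQ'
          refine ⟨Q, hQpos, hQsum, ?_, hQgood, hQchain⟩
          refine Rel.trans' S ?_ hQrel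
          rw [heqP]
          exact S.rel_swap u w la lb a b
      · -- merge a failing pair
        simp only [Good, not_forall] at hg
        obtain ⟨u, li, ai, v, lj, aj, w, heqP, hfail⟩ := hg
        rw [not_not] at hfail
        have hljpos : 1 ≤ lj := by
          apply hpos (lj, aj)
          rw [heqP]; simp
        have hlipos : 1 ≤ li := by
          apply hpos (li, ai)
          rw [heqP]; simp
        obtain ⟨l, rfl⟩ : ∃ l, lj = l + 1 := ⟨lj - 1, by omega⟩
        set Q' := u ++ (li + (l + 1), S.bst (l + 1) v aj) :: (S.pasB (l + 1) v aj ++ w) with hQ'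
        have hfstpas : (S.pasB (l + 1) v aj).map Prod.fst = v.map Prod.fst := S.pasB_fst _ _ _
        have hfstQ' : Q'.map Prod.fst
            = u.map Prod.fst ++ (li + (l + 1)) :: (v.map Prod.fst ++ w.map Prod.fst) := by
          simp [hQ', hfstpas]
        have hfstP : P.map Prod.fst
            = u.map Prod.fst ++ li :: (v.map Prod.fst ++ (l + 1) :: w.map Prod.fst) := by
          simp [heqP]
        have hposQ' : ∀ q ∈ Q', 1 ≤ q.1 := by
          intro q hq
          simp only [hQ', List.mem_append, List.mem_cons] at hq
          rcases hq with hq | hq | hq | hq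
          · exact hpos q (by rw [heqP]; simp [hq])
          · rw [hq]; simp; omega
          · have h1 : q.1 ∈ (S.pasB (l + 1) v aj).map Prod.fst := List.mem_map_of_mem hq
            rw [hfstpas] at h1
            obtain ⟨p, hp, he⟩ := List.mem_map.mp h1
            exact he ▸ hpos p (by rw [heqP]; simp [hp])
          · exact hpos q (by rw [heqP]; simp [hq])
        have hsumQ' : (Q'.map Prod.fst).sum = n := by
          rw [hfstQ']
          rw [hfstP] at hsum
          simp at hsum ⊢
          omega
        have hsumsq : sumsq P + 2 ≤ sumsq Q' := by
          unfold sumsq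
          rw [hfstQ', hfstP]
          simp
          have he : (li + (l + 1)) * (li + (l + 1))
              = li * li + (l + 1) * (l + 1) + 2 * (li * (l + 1)) := by ring
          have hp : 1 ≤ li * (l + 1) := Nat.one_le_iff_ne_zero.mpr (by positivity)
          omega
        have hsqQ'le : sumsq Q' ≤ n * n := by
          have := sq_sum_le (Q'.map Prod.fst)
          rw [hsumQ'] at this
          exact this
        have hsqPle : sumsq P ≤ n * n := by
          have := sq_sum_le (P.map Prod.fst)
          rw [hsum] at this
          exact this
        have hlinvQ' : linv (Q'.map Prod.fst) ≤ n * n := by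
          have h1 := linv_le (Q'.map Prod.fst)
          have h2 : (Q'.map Prod.fst).length ≤ n := by
            rw [← hsumQ']
            apply length_le_sum
            intro x hx
            obtain ⟨p, hp, he⟩ := List.mem_map.mp hx
            exact he ▸ hposQ' p hp
          calc linv (Q'.map Prod.fst) ≤ _ := h1
            _ ≤ n * n := Nat.mul_le_mul h2 h2
        have hmeas : meas n Q' < N := by
          unfold meas at hm ⊢
          have hA : (n * n - sumsq Q') + 1 ≤ n * n - sumsq P := by omega
          have hB : ((n * n - sumsq Q') + 1) * (n * n + 1) ≤ (n * n - sumsq P) * (n * n + 1) :=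
            Nat.mul_le_mul_right _ hA
          rw [Nat.add_mul, Nat.one_mul] at hB
          omega
        obtain ⟨Q, hQpos, hQsum, hQrel, hQgood, hQchain⟩ := ih Q' hmeas hposQ' hsumQ'
        refine ⟨Q, hQpos, hQsum, ?_, hQgood, hQchain⟩
        refine Rel.trans' S ?_ hQrel
        rw [heqP]
        exact S.rel_merge u v w li l ai aj hfail

end NDIS
lemma list_decomp {α : Type*} (P : List α) (i j : ℕ) (hij : i < j) (hj : j < P.length) :
    P.drop (i + 1) = (P.drop (i + 1)).take (j - i - 1) ++ (P[j]'hj) :: P.drop (j + 1) ∧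
    P = P.take i ++ (P[i]'(by omega)) ::
      ((P.drop (i + 1)).take (j - i - 1) ++ (P[j]'hj) :: P.drop (j + 1)) := by
  have hdj : (P.drop (i + 1)).drop (j - i - 1) = P.drop j := by
    rw [List.drop_drop]
    congr 1
    omega
  have h1 : P.drop (i + 1) = (P.drop (i + 1)).take (j - i - 1) ++ (P[j]'hj) :: P.drop (j + 1) := by
    conv_lhs => rw [← List.take_append_drop (j - i - 1) (P.drop (i + 1))]
    rw [hdj, List.drop_eq_getElem_cons hj]
  refine ⟨h1, ?_⟩
  conv_lhs => rw [← List.take_append_drop i P, List.drop_eq_getElem_cons (show i < P.length by omega)]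
  rw [← h1]

namespace NDIS
variable {X : Type*} (S : NDIS X)

lemma good_length_le [Fintype X] (Q : List (ℕ × X)) (hg : S.Good Q) :
    Q.length ≤ Fintype.card X := by
  set f : Fin Q.length → X :=
    fun i => S.tauWord (S.render (Q.drop ((i : ℕ) + 1))) (Q[(i : ℕ)]).2 with hf
  have key : ∀ i j : Fin Q.length, i < j → f i ≠ f j := by
    intro i j hij heq
    obtain ⟨h1, h2⟩ := list_decomp Q i j hij j.isLt
    set v := (Q.drop ((i : ℕ) + 1)).take ((j : ℕ) - (i : ℕ) - 1) with hv
    have hfi : f i = S.tauWord (S.render (Q.drop ((j : ℕ) + 1)))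
        (S.tauWord (S.Psi (Q[(j : ℕ)]).1 (Q[(j : ℕ)]).2) (S.tauWord (S.render v) (Q[(i : ℕ)]).2)) := by
      rw [hf]
      simp only []
      rw [h1, render_append, render_cons, tauWord_append, tauWord_append]
    have hfj : f j = S.tauWord (S.render (Q.drop ((j : ℕ) + 1))) (Q[(j : ℕ)]).2 := rfl
    rw [hfi, hfj] at heq
    have e1 := S.tauWord_injective _ heq
    have e2 : S.tauWord (S.Psi (Q[(j : ℕ)]).1 (Q[(j : ℕ)]).2) (S.D^[(Q[(j : ℕ)]).1] (Q[(j : ℕ)]).2)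
        = (Q[(j : ℕ)]).2 := S.tauWord_psi_D_pow _ _
    have e3 : S.tauWord (S.render v) (Q[(i : ℕ)]).2 = S.D^[(Q[(j : ℕ)]).1] (Q[(j : ℕ)]).2 :=
      S.tauWord_injective _ (e1.trans e2.symm)
    refine hg (Q.take i) (Q[(i : ℕ)]).1 (Q[(i : ℕ)]).2 v (Q[(j : ℕ)]).1 (Q[(j : ℕ)]).2
      (Q.drop ((j : ℕ) + 1)) ?_ e3.symm
    conv_lhs => rw [h2]
    simp
  have hinj : Function.Injective f := by
    intro i j hij
    by_contra hne
    rcases lt_or_gt_of_ne hne with h | h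
    · exact key i j h hij
    · exact key j i h hij.symm
  simpa using Fintype.card_le_of_injective f hinj

lemma render_singletons (y : List X) : S.render (y.map fun a => (1, a)) = y := by
  induction y with
  | nil => rfl
  | cons a y ih => simp [render_cons, ih]

end NDIS
namespace NDIS
variable {X : Type*} (S : NDIS X)

lemma D_Dinv [Fintype X] [Nonempty X] (x : X) : S.D (S.Dinv x) = x :=
  Function.rightInverse_invFun S.D_surjective x

lemma D_pow_Dinv_pow [Fintype X] [Nonempty X] (l : ℕ) (x : X) :
    S.D^[l] (S.Dinv^[l] x) = x := by
  induction l generalizing x with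
  | zero => rfl
  | succ l ih =>
      rw [Function.iterate_succ_apply' S.Dinv, Function.iterate_succ_apply S.D, S.D_Dinv, ih]

end NDIS

lemma sum_map_one {α : Type*} (y : List α) : (y.map fun _ => (1 : ℕ)).sum = y.length := by
  induction y with
  | nil => rfl
  | cons a y ih => simp [ih]; omega

lemma ofFn_get_map {α β : Type*} (Q : List α) (g : α → β) :
    (List.ofFn fun t : Fin Q.length => g (Q.get t)) = Q.map g := by
  rw [show (fun t : Fin Q.length => g (Q.get t)) = g ∘ Q.get from rfl, ← List.map_ofFn,
    List.ofFn_get]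

/-- Let `(X, r)` be a non-degenerate involutive solution with `|X| = m ≥ 2`
and `n ≥ 2`. Every `y ∈ X^n` lies in the orbit `O(x)` of some `λ`-element `x` for some
partition `λ ∈ P(n, m)` (given by its positive parts `L`); consequently
`X^n = ⋃_{λ ∈ P(n,m)} B(λ)`. -/
theorem every_word_in_some_B_lambda {X : Type*} [Fintype X] [Nonempty X]
    (S : NDIS X) (hm : 2 ≤ Fintype.card X) (n : ℕ) (hn : 2 ≤ n)
    (y : List X) (hy : y.length = n) :
    ∃ (k : ℕ) (L : Fin k → ℕ),
      (∀ t, 0 < L t) ∧ Antitone L ∧ (∑ t, L t = n) ∧ k ≤ Fintype.card X ∧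
      ∃ x : List X, S.IsLambdaWord L x ∧ y ∈ S.Orb x := by
  classical
  set P₀ : List (ℕ × X) := y.map fun a => (1, a) with hP₀
  have hpos₀ : ∀ p ∈ P₀, 1 ≤ p.1 := by
    intro p hp
    simp only [hP₀, List.mem_map] at hp
    obtain ⟨a, _, rfl⟩ := hp
    exact le_refl 1
  have hsum₀ : (P₀.map Prod.fst).sum = n := by
    rw [hP₀, List.map_map]
    have h : (Prod.fst ∘ fun a : X => ((1 : ℕ), a)) = fun _ => (1 : ℕ) := rfl
    rw [h, sum_map_one, hy]
  obtain ⟨Q, hQpos, hQsum, hQrel, hQgood, hQchain⟩ :=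
    S.reduce n (meas n P₀ + 1) P₀ (by omega) hpos₀ hsum₀
  refine ⟨Q.length, fun t => (Q.get t).1, ?_, ?_, ?_, ?_, S.render Q,
    ⟨fun t => (Q.get t).2, ?_, ?_⟩, ?_⟩
  · intro t
    exact hQpos (Q.get t) (List.get_mem Q t)
  · -- Antitone
    have hpw : List.Pairwise (fun x y : ℕ => y ≤ x) (Q.map Prod.fst) :=
      List.isChain_iff_pairwise.mp hQchain
    intro i j hij
    rcases eq_or_lt_of_le hij with rfl | hlt
    · exact le_refl _
    · have h := List.pairwise_iff_getElem.mp hpw i j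
        (by simpa using i.isLt) (by simpa using j.isLt) hlt
      simpa [List.get_eq_getElem] using h
  · -- sum
    rw [← List.sum_ofFn, ofFn_get_map Q Prod.fst, hQsum]
  · exact S.good_length_le Q hQgood
  · -- word equality
    show S.render Q = S.word _ _
    unfold NDIS.word NDIS.render
    rw [ofFn_get_map Q (fun p => S.Psi p.1 p.2)]
  · -- IsLambdaFamily
    intro i j hij heq
    simp only [] at heq
    set v := (Q.drop ((i : ℕ) + 1)).take ((j : ℕ) - (i : ℕ) - 1) with hv
    have hmid : S.midword (fun t => (Q.get t).1) (fun t => (Q.get t).2) i j = S.render v := by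
      unfold NDIS.midword NDIS.render
      rw [ofFn_get_map Q (fun p => S.Psi p.1 p.2), ← List.map_drop, ← List.map_take]
    have hDpow : S.D^[(Q.get j).1] ((Q.get j).2)
        = S.tauWord (S.render v) ((Q.get i).2) := by
      rw [← hmid]
      conv_lhs => rw [heq]
      exact S.D_pow_Dinv_pow _ _
    obtain ⟨h1, h2⟩ := list_decomp Q i j hij j.isLt
    refine hQgood (Q.take i) ((Q.get i).1) ((Q.get i).2) v ((Q.get j).1) ((Q.get j).2)
      (Q.drop ((j : ℕ) + 1)) ?_ hDpow
    conv_lhs => rw [h2]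
    simp [List.get_eq_getElem]
    rfl
  · -- orbit membership
    have hrel : S.Rel y (S.render Q) := by
      rwa [show S.render P₀ = y from S.render_singletons y] at hQrel
    exact (NDIS.Rel.symm' S hrel : S.Rel (S.render Q) y)
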